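/- Assume g is nondegenerate and dim V = 2n+1. Then the eigenspaces D⁺ := { v ∈ V : φ(v) = v } and D⁻ := { v ∈ V : φ(v) = −v } both have dimension n, and g has signature (n, n+1): there is a g-orthogonal basis of V consisting of n vectors v with g(v,v) = −1 and n+1 vectors v with g(v,v) = +1. (Any pseudo-Riemannian metric compatible with an almost paracontact structure on a (2n+1)-dimensional space necessarily has signature (n,n+1).) -/

import Mathlib

set_option maxHeartbeats 1000000


theorem stmt_18
    {V : Type*} [AddCommGroup V] [Module ℝ V]
    (ξ : V) (η : V →ₗ[ℝ] ℝ) (φ : V →ₗ[ℝ] V)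
    (hηξ : η ξ = 1)
    (hφ2 : ∀ v, φ (φ v) = v - η v • ξ)
    (hφξ : φ ξ = 0)
    (hηφ : ∀ v, η (φ v) = 0)
    (g : V →ₗ[ℝ] V →ₗ[ℝ] ℝ)
    (hgsymm : ∀ X Y, g X Y = g Y X)
    (hgφ : ∀ X Y, g (φ X) (φ Y) = - g X Y + η X * η Y)
    (hgnd : ∀ v : V, (∀ w, g v w = 0) → v = 0)
    [FiniteDimensional ℝ V] (n : ℕ)
    (hdim : Module.finrank ℝ V = 2 * n + 1) :
    Module.finrank ℝ (LinearMap.ker (φ - (LinearMap.id : V →ₗ[ℝ] V))) = n ∧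
    Module.finrank ℝ (LinearMap.ker (φ + (LinearMap.id : V →ₗ[ℝ] V))) = n ∧
    ∃ v : (Fin n ⊕ Fin (n + 1)) → V,
      LinearIndependent ℝ v ∧
      Submodule.span ℝ (Set.range v) = ⊤ ∧
      (∀ i j, i ≠ j → g (v i) (v j) = 0) ∧
      (∀ i : Fin n, g (v (Sum.inl i)) (v (Sum.inl i)) = -1) ∧
      (∀ j : Fin (n + 1), g (v (Sum.inr j)) (v (Sum.inr j)) = 1) := by
  classical
  set Dp := LinearMap.ker (φ - (LinearMap.id : V →ₗ[ℝ] V)) with hDpdef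
  set Dm := LinearMap.ker (φ + (LinearMap.id : V →ₗ[ℝ] V)) with hDmdef
  have memDp : ∀ v : V, v ∈ Dp ↔ φ v = v := by
    intro v
    simp [hDpdef, LinearMap.mem_ker, sub_eq_zero]
  have memDm : ∀ v : V, v ∈ Dm ↔ φ v = -v := by
    intro v
    rw [hDmdef, LinearMap.mem_ker, LinearMap.add_apply, LinearMap.id_apply,
      add_eq_zero_iff_eq_neg]
  -- g ξ w = η w
  have hgξ : ∀ w, g ξ w = η w := by
    intro w
    have h := hgφ ξ w
    rw [hφξ, hηξ] at h
    simp only [map_zero, LinearMap.zero_apply, one_mul] at h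
    linarith
  -- η vanishes on Dp and Dm
  have hηDp : ∀ v ∈ Dp, η v = 0 := by
    intro v hv
    have := hηφ v
    rwa [(memDp v).mp hv] at this
  have hηDm : ∀ v ∈ Dm, η v = 0 := by
    intro v hv
    have := hηφ v
    rw [(memDm v).mp hv, map_neg, neg_eq_zero] at this
    exact this
  -- isotropy
  have hDpiso : ∀ v ∈ Dp, ∀ w ∈ Dp, g v w = 0 := by
    intro v hv w hw
    have h := hgφ v w
    rw [(memDp v).mp hv, (memDp w).mp hw, hηDp v hv] at h
    linarith
  have hDmiso : ∀ v ∈ Dm, ∀ w ∈ Dm, g v w = 0 := by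
    intro v hv w hw
    have h := hgφ v w
    rw [(memDm v).mp hv, (memDm w).mp hw, hηDm v hv] at h
    simp only [map_neg, LinearMap.neg_apply, neg_neg, zero_mul] at h
    linarith
  -- decomposition
  have decomp : ∀ u : V, ∃ p ∈ Dp, ∃ m ∈ Dm, u = η u • ξ + p + m := by
    intro u
    refine ⟨(2⁻¹ : ℝ) • (u - η u • ξ + φ u), ?_, (2⁻¹ : ℝ) • (u - η u • ξ - φ u), ?_, ?_⟩
    · rw [memDp]
      rw [map_smul, map_add, map_sub, map_smul, hφξ, hφ2]
      module
    · rw [memDm]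
      rw [map_smul, map_sub, map_sub, map_smul, hφξ, hφ2]
      module
    · module
  -- separation
  have hsepp : ∀ v ∈ Dp, (∀ w ∈ Dm, g v w = 0) → v = 0 := by
    intro v hv h
    apply hgnd
    intro u
    obtain ⟨p, hp, m, hm, hu⟩ := decomp u
    rw [hu]
    simp only [map_add, map_smul, smul_eq_mul]
    rw [hDpiso v hv p hp, h m hm, hgsymm v ξ, hgξ, hηDp v hv]
    ring
  have hsepm : ∀ v ∈ Dm, (∀ w ∈ Dp, g v w = 0) → v = 0 := by
    intro v hv h
    apply hgnd
    intro u
    obtain ⟨p, hp, m, hm, hu⟩ := decomp u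
    rw [hu]
    simp only [map_add, map_smul, smul_eq_mul]
    rw [hDmiso v hv m hm, h p hp, hgsymm v ξ, hgξ, hηDm v hv]
    ring
  -- dimension of ker η
  have hηker : Module.finrank ℝ (LinearMap.ker η) = 2 * n := by
    have hr : LinearMap.range η = ⊤ := by
      rw [LinearMap.range_eq_top]
      intro r
      exact ⟨r • ξ, by simp [hηξ]⟩
    have := LinearMap.finrank_range_add_finrank_ker η
    rw [hr, finrank_top, hdim] at this
    simp only [Module.finrank_self] at this
    omega
  -- ker η = Dp ⊔ Dm
  have hsup : Dp ⊔ Dm = LinearMap.ker η := by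
    apply le_antisymm
    · apply sup_le
      · intro v hv; exact LinearMap.mem_ker.mpr (hηDp v hv)
      · intro v hv; exact LinearMap.mem_ker.mpr (hηDm v hv)
    · intro u hu
      obtain ⟨p, hp, m, hm, hdu⟩ := decomp u
      rw [LinearMap.mem_ker] at hu
      rw [hdu, hu, zero_smul, zero_add]
      exact Submodule.add_mem_sup hp hm
  have hinf : Dp ⊓ Dm = ⊥ := by
    rw [Submodule.eq_bot_iff]
    intro v hv
    have h1 := (memDp v).mp hv.1
    have h2 := (memDm v).mp hv.2
    have h3 : v + v = 0 := add_eq_zero_iff_eq_neg.mpr (h1.symm.trans h2)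
    have h4 : (2 : ℝ) • v = 0 := by rw [two_smul]; exact h3
    exact (smul_eq_zero.mp h4).resolve_left (by norm_num)
  have hsum : Module.finrank ℝ Dp + Module.finrank ℝ Dm = 2 * n := by
    have h2 := Submodule.finrank_sup_add_finrank_inf_eq Dp Dm
    rw [hsup, hinf, hηker, finrank_bot] at h2
    omega
  -- the pairing Dp × Dm
  set B : Dp →ₗ[ℝ] Dm →ₗ[ℝ] ℝ := g.compl₁₂ Dp.subtype Dm.subtype with hBdef
  have hBapp : ∀ (p : Dp) (m : Dm), B p m = g (p : V) (m : V) := by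
    intro p m; rfl
  have hBinj : Function.Injective B := by
    rw [injective_iff_map_eq_zero]
    intro p hp
    have : (p : V) = 0 := by
      apply hsepp _ p.2
      intro w hw
      have := congrArg (fun F => F ⟨w, hw⟩) hp
      simpa [hBapp] using this
    exact Subtype.ext this
  have hBfinj : Function.Injective B.flip := by
    rw [injective_iff_map_eq_zero]
    intro m hm
    have : (m : V) = 0 := by
      apply hsepm _ m.2
      intro w hw
      have := congrArg (fun F => F ⟨w, hw⟩) hm
      simp only [LinearMap.flip_apply, hBapp, LinearMap.zero_apply] at this
      rw [hgsymm]
      exact this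
    exact Subtype.ext this
  have hle1 : Module.finrank ℝ Dp ≤ Module.finrank ℝ Dm := by
    have := LinearMap.finrank_le_finrank_of_injective hBinj
    rwa [Subspace.dual_finrank_eq] at this
  have hle2 : Module.finrank ℝ Dm ≤ Module.finrank ℝ Dp := by
    have := LinearMap.finrank_le_finrank_of_injective hBfinj
    rwa [Subspace.dual_finrank_eq] at this
  have hdimDp : Module.finrank ℝ Dp = n := by omega
  have hdimDm : Module.finrank ℝ Dm = n := by omega
  refine ⟨hdimDp, hdimDm, ?_⟩
  -- dual bases
  have e : Module.Basis (Fin n) ℝ Dp := Module.finBasisOfFinrankEq ℝ Dp hdimDp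
  have hdual : Module.finrank ℝ Dm = Module.finrank ℝ (Module.Dual ℝ Dp) := by
    rw [Subspace.dual_finrank_eq]; omega
  set equiv : Dm ≃ₗ[ℝ] Module.Dual ℝ Dp :=
    LinearMap.linearEquivOfInjective B.flip hBfinj hdual with hequiv
  set f : Module.Basis (Fin n) ℝ Dm := e.dualBasis.map equiv.symm with hfdef
  set E : Fin n → V := fun i => (e i : V) with hEdef
  set F : Fin n → V := fun i => (f i : V) with hFdef
  have hEF : ∀ i j, g (E i) (F j) = if i = j then 1 else 0 := by
    intro i j
    have h1 : equiv (f j) = e.dualBasis j := by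
      rw [hfdef, Module.Basis.map_apply, LinearEquiv.apply_symm_apply]
    have h2 : B.flip (f j) = e.dualBasis j := by
      rw [← h1, hequiv, LinearMap.linearEquivOfInjective_apply]
    have h3 := congrArg (fun F => F (e i)) h2
    simp only [LinearMap.flip_apply, hBapp] at h3
    exact h3.trans (e.dualBasis_apply_self j i)
  have hFE : ∀ i j, g (F i) (E j) = if i = j then 1 else 0 := by
    intro i j
    rw [hgsymm, hEF]
    by_cases h : i = j
    · subst h; simp
    · rw [if_neg h, if_neg (Ne.symm h)]
  have hEE : ∀ i j, g (E i) (E j) = 0 := fun i j => hDpiso _ (e i).2 _ (e j).2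
  have hFF : ∀ i j, g (F i) (F j) = 0 := fun i j => hDmiso _ (f i).2 _ (f j).2
  have hξE : ∀ i, g ξ (E i) = 0 := by
    intro i; rw [hgξ]; exact hηDp _ (e i).2
  have hξF : ∀ i, g ξ (F i) = 0 := by
    intro i; rw [hgξ]; exact hηDm _ (f i).2
  have hEξ : ∀ i, g (E i) ξ = 0 := fun i => (hgsymm _ _).trans (hξE i)
  have hFξ : ∀ i, g (F i) ξ = 0 := fun i => (hgsymm _ _).trans (hξF i)
  have hξξ : g ξ ξ = 1 := by rw [hgξ, hηξ]
  -- the candidate basis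
  set v : (Fin n ⊕ Fin (n + 1)) → V := Sum.elim
      (fun i => E i + (-(2⁻¹ : ℝ)) • F i)
      (fun j => if h : (j : ℕ) < n then E ⟨j, h⟩ + ((2⁻¹ : ℝ)) • F ⟨j, h⟩ else ξ)
    with hvdef
  have hvinl : ∀ i : Fin n, v (Sum.inl i) = E i + (-(2⁻¹ : ℝ)) • F i := fun i => rfl
  have hvinr : ∀ (j : Fin (n+1)) (h : (j : ℕ) < n),
      v (Sum.inr j) = E ⟨j, h⟩ + ((2⁻¹ : ℝ)) • F ⟨j, h⟩ := by
    intro j h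
    simp only [hvdef, Sum.elim_inr]
    rw [dif_pos h]
  have hvlast : ∀ (j : Fin (n+1)), ¬ ((j : ℕ) < n) → v (Sum.inr j) = ξ := by
    intro j h
    simp only [hvdef, Sum.elim_inr]
    rw [dif_neg h]
  have expand : ∀ (a b c d : V) (s t : ℝ),
      g (a + s • b) (c + t • d) = g a c + t * g a d + s * g b c + s * t * g b d := by
    intro a b c d s t
    simp only [map_add, map_smul, LinearMap.add_apply, LinearMap.smul_apply, smul_eq_mul]
    ring
  have gξr : ∀ (c d : V) (t : ℝ), g ξ (c + t • d) = g ξ c + t * g ξ d := by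
    intro c d t
    simp only [map_add, map_smul, smul_eq_mul]
  have gξl : ∀ (a b : V) (s : ℝ), g (a + s • b) ξ = g a ξ + s * g b ξ := by
    intro a b s
    simp only [map_add, map_smul, LinearMap.add_apply, LinearMap.smul_apply, smul_eq_mul]
  -- span
  have hξmem : ξ ∈ Submodule.span ℝ (Set.range v) := by
    have : v (Sum.inr ⟨n, by omega⟩) = ξ := hvlast _ (by simp)
    rw [← this]
    exact Submodule.subset_span ⟨_, rfl⟩
  have hkey : ∀ i : Fin n, E i + (2⁻¹ : ℝ) • F i ∈ Submodule.span ℝ (Set.range v) := by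
    intro i
    have h : ((⟨(i : ℕ), by omega⟩ : Fin (n + 1)) : ℕ) < n := i.isLt
    have hmem : v (Sum.inr ⟨(i : ℕ), by omega⟩) ∈ Submodule.span ℝ (Set.range v) :=
      Submodule.subset_span ⟨_, rfl⟩
    rw [hvinr _ h] at hmem
    have heq : (⟨((⟨(i : ℕ), by omega⟩ : Fin (n + 1)) : ℕ), h⟩ : Fin n) = i := Fin.ext rfl
    rwa [heq] at hmem
  have hkey' : ∀ i : Fin n, E i + (-(2⁻¹ : ℝ)) • F i ∈ Submodule.span ℝ (Set.range v) := by
    intro i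
    have hmem : v (Sum.inl i) ∈ Submodule.span ℝ (Set.range v) :=
      Submodule.subset_span ⟨_, rfl⟩
    rwa [hvinl] at hmem
  have hEmem : ∀ i : Fin n, E i ∈ Submodule.span ℝ (Set.range v) := by
    intro i
    have hE : E i = (2⁻¹ : ℝ) • ((E i + (-(2⁻¹ : ℝ)) • F i) + (E i + (2⁻¹ : ℝ) • F i)) := by
      module
    rw [hE]
    exact Submodule.smul_mem _ _ (Submodule.add_mem _ (hkey' i) (hkey i))
  have hFmem : ∀ i : Fin n, F i ∈ Submodule.span ℝ (Set.range v) := by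
    intro i
    have hF : F i = (E i + (2⁻¹ : ℝ) • F i) - (E i + (-(2⁻¹ : ℝ)) • F i) := by
      module
    rw [hF]
    exact Submodule.sub_mem _ (hkey i) (hkey' i)
  have hDpmem : ∀ x ∈ Dp, x ∈ Submodule.span ℝ (Set.range v) := by
    intro x hx
    have hrep := e.sum_repr ⟨x, hx⟩
    have hxeq : x = ∑ i, e.repr ⟨x, hx⟩ i • E i := by
      have h := congrArg (Dp.subtype) hrep
      simp only [map_sum, map_smul, Submodule.coe_subtype] at h
      exact h.symm
    rw [hxeq]
    exact Submodule.sum_mem _ fun i _ => Submodule.smul_mem _ _ (hEmem i)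
  have hDmmem : ∀ x ∈ Dm, x ∈ Submodule.span ℝ (Set.range v) := by
    intro x hx
    have hrep := f.sum_repr ⟨x, hx⟩
    have hxeq : x = ∑ i, f.repr ⟨x, hx⟩ i • F i := by
      have h := congrArg (Dm.subtype) hrep
      simp only [map_sum, map_smul, Submodule.coe_subtype] at h
      exact h.symm
    rw [hxeq]
    exact Submodule.sum_mem _ fun i _ => Submodule.smul_mem _ _ (hFmem i)
  have hspan : Submodule.span ℝ (Set.range v) = ⊤ := by
    rw [eq_top_iff]
    intro u _
    obtain ⟨p, hp, m, hm, hu⟩ := decomp u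
    rw [hu]
    exact Submodule.add_mem _
      (Submodule.add_mem _ (Submodule.smul_mem _ _ hξmem) (hDpmem p hp)) (hDmmem m hm)
  have hindep : LinearIndependent ℝ v := by
    apply linearIndependent_of_top_le_span_of_card_eq_finrank (le_of_eq hspan.symm)
    simp only [Fintype.card_sum, Fintype.card_fin, hdim]
    omega
  refine ⟨v, hindep, hspan, ?_, ?_, ?_⟩
  · -- orthogonality
    rintro (i | i) (j | j) hij
    · have hne : i ≠ j := fun hc => hij (by rw [hc])
      rw [hvinl, hvinl, expand, hEE, hEF, hFE, hFF, if_neg hne]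
      ring
    · by_cases h : (j : ℕ) < n
      · rw [hvinl, hvinr j h, expand, hEE, hEF, hFE, hFF]
        split_ifs <;> ring
      · rw [hvinl, hvlast j h, gξl, hEξ, hFξ]
        ring
    · by_cases h : (i : ℕ) < n
      · rw [hvinl, hvinr i h, expand, hEE, hEF, hFE, hFF]
        split_ifs <;> ring
      · rw [hvinl, hvlast i h, gξr, hξE, hξF]
        ring
    · by_cases h : (i : ℕ) < n
      · by_cases h' : (j : ℕ) < n
        · have hne : (⟨(i : ℕ), h⟩ : Fin n) ≠ ⟨(j : ℕ), h'⟩ := by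
            intro hc
            apply hij
            exact congrArg Sum.inr (Fin.ext (Fin.mk_eq_mk.mp hc))
          rw [hvinr i h, hvinr j h', expand, hEE, hEF, hFE, hFF, if_neg hne]
          ring
        · rw [hvinr i h, hvlast j h', gξl, hEξ, hFξ]
          ring
      · by_cases h' : (j : ℕ) < n
        · rw [hvlast i h, hvinr j h', gξr, hξE, hξF]
          ring
        · exfalso
          apply hij
          have hi : (i : ℕ) = n := by omega
          have hj : (j : ℕ) = n := by omega
          exact congrArg Sum.inr (Fin.ext (hi.trans hj.symm))
  · -- diagonal inl
    intro i
    rw [hvinl, expand, hEE, hEF, hFE, hFF, if_pos rfl]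
    ring
  · -- diagonal inr
    intro j
    by_cases h : (j : ℕ) < n
    · rw [hvinr j h, expand, hEE, hEF, hFE, hFF, if_pos rfl]
      ring
    · rw [hvlast j h]
      exact hξξ
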